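/- Let A = [[1, 1], [0, 1]] and B = [[1, 0], [1, 1]] be 2×2 integer matrices, and let M be any product of matrices each of the form Aⁿ·Bᵐ with n, m positive integers. Then trace(M) > 0. -/

import Mathlib

private lemma powA (n : ℕ) : (!![1, 1; 0, 1] : Matrix (Fin 2) (Fin 2) ℤ) ^ n = !![1, (n:ℤ); 0, 1] := by
  induction n with
  | zero => simp [Matrix.one_fin_two]
  | succ k ih => rw [pow_succ, ih]; ext i j; fin_cases i <;> fin_cases j <;>
      simp [Matrix.mul_apply, Fin.sum_univ_two] <;> push_cast <;> ring

private lemma powB (n : ℕ) : (!![1, 0; 1, 1] : Matrix (Fin 2) (Fin 2) ℤ) ^ n = !![1, 0; (n:ℤ), 1] := by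
  induction n with
  | zero => simp [Matrix.one_fin_two]
  | succ k ih => rw [pow_succ, ih]; ext i j; fin_cases i <;> fin_cases j <;>
      simp [Matrix.mul_apply, Fin.sum_univ_two] <;> push_cast <;> ring

private lemma pos_mul {M N : Matrix (Fin 2) (Fin 2) ℤ} (hM : ∀ i j, 0 < M i j)
    (hN : ∀ i j, 0 < N i j) : ∀ i j, 0 < (M * N) i j := by
  intro i j
  rw [Matrix.mul_apply, Fin.sum_univ_two]
  exact add_pos (mul_pos (hM i 0) (hN 0 j)) (mul_pos (hM i 1) (hN 1 j))

theorem stmt_7 (A B : Matrix (Fin 2) (Fin 2) ℤ)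
    (hA : A = !![1, 1; 0, 1]) (hB : B = !![1, 0; 1, 1])
    (L : List (ℕ × ℕ)) (hL : ∀ nm ∈ L, 1 ≤ nm.1 ∧ 1 ≤ nm.2) :
    0 < Matrix.trace ((L.map (fun nm => A ^ nm.1 * B ^ nm.2)).prod) := by
  subst hA hB
  induction L with
  | nil => simp [Matrix.trace, Matrix.diag, Fin.sum_univ_two]
  | cons hd tl ih =>
    have key : ∀ (l : List (ℕ × ℕ)), l ≠ [] → (∀ nm ∈ l, 1 ≤ nm.1 ∧ 1 ≤ nm.2) →
        ∀ i j, 0 < ((l.map (fun nm => (!![1, 1; 0, 1] : Matrix (Fin 2) (Fin 2) ℤ) ^ nm.1 * (!![1, 0; 1, 1] : Matrix (Fin 2) (Fin 2) ℤ) ^ nm.2)).prod) i j := by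
      intro l
      induction l with
      | nil => simp
      | cons a t iht =>
        intro _ hmem
        have ha := hmem a (List.mem_cons_self (a := a) (l := t))
        have hpa : ∀ i j, 0 < ((!![1, 1; 0, 1] : Matrix (Fin 2) (Fin 2) ℤ) ^ a.1 * (!![1, 0; 1, 1] : Matrix (Fin 2) (Fin 2) ℤ) ^ a.2) i j := by
          intro i j
          rw [powA, powB]
          have hi1 : (1:ℤ) ≤ a.1 := by exact_mod_cast ha.1
          have hi2 : (1:ℤ) ≤ a.2 := by exact_mod_cast ha.2
          fin_cases i <;> fin_cases j <;>
            simp [Matrix.mul_apply, Fin.sum_univ_two] <;> nlinarith [hi1, hi2]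
        rcases eq_or_ne t [] with rfl | ht
        · simpa using hpa
        · have := iht ht (fun nm h => hmem nm (List.mem_cons_of_mem a h))
          simp only [List.map_cons, List.prod_cons]
          exact pos_mul hpa this
    have := key (hd :: tl) (by simp) hL
    rw [Matrix.trace, Fin.sum_univ_two]
    have h0 := this 0 0
    have h1 := this 1 1
    simp [Matrix.diag] at *
    omega
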